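/- Let (Y_p)_{p prime} be independent random variables taking values 1 and -1 each with probability 1/2. Then the random product ∏_p (1 - Y_p/p)^{-1} converges almost surely to a finite nonzero limit. -/

import Mathlib

open Filter MeasureTheory ProbabilityTheory

private lemma eventuallyEq_finset_sum' {α : Type*} {l : Filter α} {ι : Type*} (s : Finset ι)
    (f g : ι → α → ℝ) (h : ∀ i ∈ s, f i =ᶠ[l] g i) :
    (∑ i ∈ s, f i) =ᶠ[l] ∑ i ∈ s, g i := by
  classical
  induction s using Finset.induction_on with
  | empty => simp
  | insert _ _ hx ih =>
    rw [Finset.sum_insert hx, Finset.sum_insert hx]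
    exact (h _ (Finset.mem_insert_self _ _)).add (ih fun i hi => h i (Finset.mem_insert_of_mem hi))

private lemma indepFun_zero_right' {Ω : Type*} [MeasurableSpace Ω] (μ : Measure Ω)
    [IsProbabilityMeasure μ] (f : Ω → ℝ) : IndepFun f (0 : Ω → ℝ) μ := by
  rw [indepFun_iff_measure_inter_preimage_eq_mul]
  intro s t _ _
  by_cases h0 : (0:ℝ) ∈ t
  · have : (0 : Ω → ℝ) ⁻¹' t = Set.univ := by ext ω; simp [h0]
    simp [this]
  · have : (0 : Ω → ℝ) ⁻¹' t = ∅ := by ext ω; simp [h0]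
    simp [this]

/-- Let `(Y_p)_{p prime}` be independent random variables taking values `1`
and `-1` each with probability `1/2`. Then the random Euler product
`∏_p (1 - Y_p/p)⁻¹` (partial products over primes `p < n`) converges almost
surely to a finite nonzero limit. -/
theorem random_euler_product_pm_one_converges_ae
    {Ω : Type*} [MeasurableSpace Ω] (μ : Measure Ω) [IsProbabilityMeasure μ]
    (Y : {p : ℕ // p.Prime} → Ω → ℝ)
    (hmeas : ∀ p, Measurable (Y p))
    (hindep : iIndepFun Y μ)
    (h1 : ∀ p : {p : ℕ // p.Prime}, μ {ω | Y p ω = 1} = ENNReal.ofReal (1 / 2 : ℝ))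
    (hm1 : ∀ p : {p : ℕ // p.Prime}, μ {ω | Y p ω = -1} = ENNReal.ofReal (1 / 2 : ℝ)) :
    ∀ᵐ ω ∂μ, ∃ l : ℝ, l ≠ 0 ∧
      Tendsto (fun n : ℕ => ∏ p ∈ Finset.range n,
          if hp : p.Prime then (1 - Y ⟨p, hp⟩ ω / p)⁻¹ else 1)
        atTop (nhds l) := by
  classical
  -- the variables take values `±1` almost surely
  have hpm : ∀ p : {p : ℕ // p.Prime}, ∀ᵐ ω ∂μ, Y p ω = 1 ∨ Y p ω = -1 := by
    intro p
    have hA : MeasurableSet {ω | Y p ω = 1} := hmeas p (measurableSet_singleton 1)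
    have hB : MeasurableSet {ω | Y p ω = -1} := hmeas p (measurableSet_singleton (-1))
    have hd : Disjoint {ω | Y p ω = 1} {ω | Y p ω = -1} := by
      rw [Set.disjoint_left]
      rintro ω h1' h2'
      simp only [Set.mem_setOf_eq] at h1' h2'
      rw [h1'] at h2'; norm_num at h2'
    have hU : μ ({ω | Y p ω = 1} ∪ {ω | Y p ω = -1}) = 1 := by
      rw [measure_union hd hB, h1 p, hm1 p,
        ← ENNReal.ofReal_add (by norm_num) (by norm_num)]
      norm_num
    have hcompl : μ {ω | ¬(Y p ω = 1 ∨ Y p ω = -1)} = 0 := by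
      have heq : {ω | ¬(Y p ω = 1 ∨ Y p ω = -1)} =
          ({ω | Y p ω = 1} ∪ {ω | Y p ω = -1})ᶜ := by
        ext ω; simp [not_or]
      rw [heq, prob_compl_eq_one_sub (hA.union hB), hU, tsub_self]
    exact ae_iff.2 hcompl
  have hbd : ∀ p, ∀ᵐ ω ∂μ, ‖Y p ω‖ ≤ 1 := by
    intro p
    filter_upwards [hpm p] with ω h
    rcases h with h | h <;> simp [h]
  have hL2 : ∀ p, MemLp (Y p) 2 μ := fun p =>
    (memLp_top_of_bound (hmeas p).aestronglyMeasurable 1 (hbd p)).mono_exponent le_top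
  have hYint : ∀ p, Integrable (Y p) μ := fun p => (hL2 p).integrable one_le_two
  -- mean zero
  have hmean : ∀ p, ∫ ω, Y p ω ∂μ = 0 := by
    intro p
    have hA : MeasurableSet {ω | Y p ω = 1} := hmeas p (measurableSet_singleton 1)
    have hB : MeasurableSet {ω | Y p ω = -1} := hmeas p (measurableSet_singleton (-1))
    have hrep : Y p =ᵐ[μ] fun ω =>
        Set.indicator {ω | Y p ω = 1} (fun _ => (1:ℝ)) ω
          - Set.indicator {ω | Y p ω = -1} (fun _ => (1:ℝ)) ω := by
      filter_upwards [hpm p] with ω h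
      rcases h with h | h
      · rw [Set.indicator_of_mem (by exact h),
          Set.indicator_of_notMem (by norm_num [Set.mem_setOf_eq, h])]
        simp [h]
      · rw [Set.indicator_of_notMem (by norm_num [Set.mem_setOf_eq, h]),
          Set.indicator_of_mem (by exact h)]
        simp [h]
    rw [integral_congr_ae hrep,
      integral_sub ((integrable_const (1:ℝ)).indicator hA) ((integrable_const (1:ℝ)).indicator hB),
      integral_indicator_const _ hA, integral_indicator_const _ hB, measureReal_def, measureReal_def, h1 p, hm1 p]
    simp
  -- variance one
  have hvar1 : ∀ p, variance (Y p) μ = 1 := by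
    intro p
    rw [variance_eq_sub (hL2 p), hmean p]
    have hsq : ∫ ω, (Y p ^ 2) ω ∂μ = ∫ _ω, (1:ℝ) ∂μ := by
      refine integral_congr_ae ?_
      filter_upwards [hpm p] with ω h
      rcases h with h | h <;> simp [h]
    rw [hsq]; simp
  -- the summands
  set Z : ℕ → Ω → ℝ := fun k ω => if hk : k.Prime then Y ⟨k, hk⟩ ω / k else 0 with hZdef
  set S : ℕ → Ω → ℝ := fun n ω => ∑ k ∈ Finset.range n, Z k ω with hSdef
  have hZeq : ∀ (k) (hk : k.Prime), Z k = fun ω => ((k:ℝ))⁻¹ * Y ⟨k, hk⟩ ω := by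
    intro k hk
    funext ω
    rw [hZdef]
    simp only [dif_pos hk]
    rw [div_eq_inv_mul]
  have hZzero : ∀ k, ¬k.Prime → Z k = 0 := by
    intro k hk
    funext ω
    rw [hZdef]
    simp [hk]
  have hZL2 : ∀ k, MemLp (Z k) 2 μ := by
    intro k
    by_cases hk : k.Prime
    · rw [hZeq k hk]; exact (hL2 _).const_mul _
    · rw [hZzero k hk]; exact memLp_const 0
  have hZint : ∀ k, Integrable (Z k) μ := fun k => (hZL2 k).integrable one_le_two
  have hZmean : ∀ k, ∫ ω, Z k ω ∂μ = 0 := by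
    intro k
    by_cases hk : k.Prime
    · rw [hZeq k hk, integral_const_mul, hmean, mul_zero]
    · rw [hZzero k hk]; simp
  have hZvar : ∀ k, variance (Z k) μ = if k.Prime then ((k:ℝ))⁻¹ ^ 2 else 0 := by
    intro k
    by_cases hk : k.Prime
    · rw [if_pos hk, hZeq k hk, variance_const_mul, hvar1, mul_one]
    · rw [if_neg hk, hZzero k hk]
      exact variance_zero μ
  -- pairwise independence of the summands
  have hZindep : ∀ i j : ℕ, i ≠ j → IndepFun (Z i) (Z j) μ := by
    intro i j hij
    by_cases hi : i.Prime
    · by_cases hj : j.Prime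
      · have hne : (⟨i, hi⟩ : {p : ℕ // p.Prime}) ≠ ⟨j, hj⟩ := by
          intro h; exact hij (congrArg Subtype.val h)
        have := (hindep.indepFun hne).comp
          (measurable_const_mul ((i:ℝ))⁻¹) (measurable_const_mul ((j:ℝ))⁻¹)
        rw [hZeq i hi, hZeq j hj]
        exact this
      · rw [hZzero j hj]
        exact indepFun_zero_right' μ (Z i)
    · rw [hZzero i hi]
      exact (indepFun_zero_right' μ (Z j)).symm
  -- partial sums : basic properties
  have hSfun : ∀ n, (∑ k ∈ Finset.range n, Z k) = S n := by
    intro n; funext ω; rw [hSdef]; simp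
  have hSL2 : ∀ n, MemLp (S n) 2 μ := by
    intro n
    rw [← hSfun n]
    exact memLp_finset_sum' _ fun k _ => hZL2 k
  have hSint : ∀ n, Integrable (S n) μ := fun n => (hSL2 n).integrable one_le_two
  have hSmean : ∀ n, ∫ ω, S n ω ∂μ = 0 := by
    intro n
    have : ∫ ω, S n ω ∂μ = ∑ k ∈ Finset.range n, ∫ ω, Z k ω ∂μ := by
      rw [hSdef]
      exact integral_finset_sum _ fun k _ => hZint k
    rw [this]
    simp [hZmean]
  -- the tail bound series
  set G : ℕ → ℝ := fun k => if k.Prime then ((k:ℝ))⁻¹ ^ 2 else 0 with hGdef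
  have hGnonneg : ∀ k, 0 ≤ G k := by
    intro k; rw [hGdef]; dsimp only; split <;> positivity
  have hGsummable : Summable G := by
    refine Summable.of_nonneg_of_le hGnonneg (fun k => ?_)
      ((Real.summable_one_div_nat_pow.2 one_lt_two))
    rw [hGdef]; dsimp only
    split
    · rw [inv_pow, inv_eq_one_div]
    · positivity
  set V : ℝ := ∑' k, G k with hVdef
  have hSvar : ∀ n, variance (S n) μ ≤ V := by
    intro n
    have h1' : variance (S n) μ = ∑ k ∈ Finset.range n, G k := by
      rw [← hSfun n, IndepFun.variance_sum (fun k _ => hZL2 k)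
        (fun i hi j hj hij => hZindep i j hij)]
      exact Finset.sum_congr rfl fun k _ => hZvar k
    rw [h1', hVdef]
    exact Summable.sum_le_tsum _ (fun k _ => hGnonneg k) hGsummable
  have hVnonneg : 0 ≤ V := tsum_nonneg hGnonneg
  -- L¹ bound on the partial sums
  have hbdd : ∀ n, eLpNorm (S n) 1 μ ≤ ENNReal.ofReal (1 + V) := by
    intro n
    rw [eLpNorm_one_eq_lintegral_enorm, ← ofReal_integral_norm_eq_lintegral_enorm (hSint n)]
    apply ENNReal.ofReal_le_ofReal
    have hmono : ∫ ω, ‖S n ω‖ ∂μ ≤ ∫ ω, (1 + S n ω ^ 2) ∂μ := by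
      refine integral_mono (hSint n).norm ((integrable_const 1).add (hSL2 n).integrable_sq) ?_
      intro ω
      show ‖S n ω‖ ≤ 1 + S n ω ^ 2
      rw [Real.norm_eq_abs]
      nlinarith [sq_abs (S n ω), abs_nonneg (S n ω), sq_nonneg (|S n ω| - 1)]
    have hadd : ∫ ω, (1 + S n ω ^ 2) ∂μ = 1 + ∫ ω, S n ω ^ 2 ∂μ := by
      rw [integral_add (integrable_const 1) (hSL2 n).integrable_sq]
      simp
    have hvarS : ∫ ω, S n ω ^ 2 ∂μ = variance (S n) μ := by
      rw [variance_eq_sub (hSL2 n), hSmean n]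
      simp
    calc ∫ ω, ‖S n ω‖ ∂μ ≤ ∫ ω, (1 + S n ω ^ 2) ∂μ := hmono
      _ = 1 + variance (S n) μ := by rw [hadd, hvarS]
      _ ≤ 1 + V := by linarith [hSvar n]
  -- the filtration generated by the variables with index `< n`
  set mY : {p : ℕ // p.Prime} → MeasurableSpace Ω :=
    fun p => MeasurableSpace.comap (Y p) inferInstance with hmYdef
  have hmYle : ∀ p, mY p ≤ ‹MeasurableSpace Ω› := fun p => (hmeas p).comap_le
  have hYmY : ∀ p, @Measurable Ω ℝ (mY p) _ (Y p) := fun p => measurable_iff_comap_le.2 le_rfl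
  set ℱ : Filtration ℕ ‹MeasurableSpace Ω› :=
    { seq := fun n => ⨆ p ∈ {q : {p : ℕ // p.Prime} | (q : ℕ) < n}, mY p
      mono' := fun i j hij => biSup_mono fun p hp => lt_of_lt_of_le hp hij
      le' := fun n => iSup₂_le fun p _ => hmYle p } with hℱdef
  have hℱ : ∀ n, ℱ n = ⨆ p ∈ {q : {p : ℕ // p.Prime} | (q : ℕ) < n}, mY p := fun n => rfl
  have hZmF : ∀ n k, k < n → @Measurable Ω ℝ (ℱ n) _ (Z k) := by
    intro n k hkn
    by_cases hk : k.Prime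
    · rw [hZeq k hk]
      have hle : mY ⟨k, hk⟩ ≤ ℱ n := by
        rw [hℱ n]
        exact le_iSup₂ (f := fun (p : {p : ℕ // p.Prime}) (_ : (p:ℕ) < n) => mY p) ⟨k, hk⟩ hkn
      exact ((hYmY ⟨k, hk⟩).mono hle le_rfl).const_mul _
    · rw [hZzero k hk]
      exact @measurable_const ℝ Ω _ (ℱ n) 0
  have hadp : StronglyAdapted ℱ S := by
    intro n
    have hm' : @Measurable Ω ℝ (ℱ n) _ (S n) :=
      Finset.measurable_sum (Finset.range n) fun k hk => hZmF n k (Finset.mem_range.1 hk)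
    exact hm'.stronglyMeasurable
  -- the martingale property
  have hmart : Martingale S ℱ μ := by
    refine ⟨hadp, fun i j hij => ?_⟩
    have hdecomp : S j = S i + ∑ k ∈ Finset.Ico i j, Z k := by
      funext ω
      simp only [Pi.add_apply, Finset.sum_apply]
      show (∑ k ∈ Finset.range j, Z k ω) =
        (∑ k ∈ Finset.range i, Z k ω) + ∑ k ∈ Finset.Ico i j, Z k ω
      rw [Finset.range_eq_Ico, Finset.range_eq_Ico]
      exact (Finset.sum_Ico_consecutive (fun k => Z k ω) (Nat.zero_le i) hij).symm
    have hDint : Integrable (∑ k ∈ Finset.Ico i j, Z k) μ := by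
      have := integrable_finset_sum (Finset.Ico i j) fun k (_ : k ∈ Finset.Ico i j) => hZint k
      refine this.congr (Eventually.of_forall fun a => ?_)
      simp
    have h0 : ∀ k ∈ Finset.Ico i j, μ[Z k|ℱ i] =ᵐ[μ] (fun _ => (0:ℝ)) := by
      intro k hk
      obtain ⟨hik, _⟩ := Finset.mem_Ico.1 hk
      by_cases hkp : k.Prime
      · have hind : Indep (mY ⟨k, hkp⟩) (ℱ i) μ := by
          have hdisj : Disjoint ({(⟨k, hkp⟩ : {p : ℕ // p.Prime})} : Set {p : ℕ // p.Prime})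
              {q : {p : ℕ // p.Prime} | (q : ℕ) < i} := by
            rw [Set.disjoint_left]
            rintro q hq hq'
            rw [Set.mem_singleton_iff] at hq
            subst hq
            simp only [Set.mem_setOf_eq] at hq'
            omega
          have := indep_iSup_of_disjoint hmYle (hindep : iIndep mY μ) hdisj
          rw [hℱ i]
          simpa [iSup_singleton] using this
        have hsm : @StronglyMeasurable Ω ℝ _ (mY ⟨k, hkp⟩) (Z k) := by
          rw [hZeq k hkp]
          exact (((hYmY ⟨k, hkp⟩).const_mul _).stronglyMeasurable :
            @StronglyMeasurable Ω ℝ _ (mY ⟨k, hkp⟩) _)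
        have := condExp_indep_eq (hmYle ⟨k, hkp⟩) (ℱ.le i) hsm hind
        refine this.trans ?_
        rw [hZmean k]
      · rw [hZzero k hkp, condExp_zero]
        rfl
    have hD0 : μ[(∑ k ∈ Finset.Ico i j, Z k)|ℱ i] =ᵐ[μ] (fun _ => (0:ℝ)) := by
      refine (condExp_finset_sum (fun k _ => hZint k) (ℱ i)).trans ?_
      refine (eventuallyEq_finset_sum' _ _ _ h0).trans ?_
      have hzz : (∑ _k ∈ Finset.Ico i j, (fun _ : Ω => (0:ℝ))) = fun _ : Ω => (0:ℝ) := by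
        funext x; simp
      rw [hzz]
    have hSi : μ[S i|ℱ i] = S i :=
      condExp_of_stronglyMeasurable (ℱ.le i) (hadp i) (hSint i)
    calc μ[S j|ℱ i] = μ[S i + ∑ k ∈ Finset.Ico i j, Z k|ℱ i] := by rw [hdecomp]
      _ =ᵐ[μ] μ[S i|ℱ i] + μ[(∑ k ∈ Finset.Ico i j, Z k)|ℱ i] := condExp_add (hSint i) hDint (ℱ i)
      _ =ᵐ[μ] S i + (fun _ => (0:ℝ)) := by
          rw [hSi]
          exact EventuallyEq.add (by rfl) hD0
      _ = S i := by funext ω; simp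
  -- almost sure convergence of the partial sums
  have hconv : ∀ᵐ ω ∂μ, ∃ c, Tendsto (fun n => S n ω) atTop (nhds c) := by
    refine hmart.submartingale.exists_ae_tendsto_of_bdd (R := (1 + V).toNNReal) fun n => ?_
    exact le_trans (hbdd n) le_rfl
  -- conclusion
  filter_upwards [hconv, ae_all_iff.2 hpm] with ω hcω hpmω
  obtain ⟨c, hc⟩ := hcω
  -- the remainder series converges absolutely
  set g : ℕ → ℝ :=
    fun k => if hk : k.Prime then -Real.log (1 - Y ⟨k, hk⟩ ω / k) - Z k ω else 0 with hgdef
  have hx : ∀ (k) (hk : k.Prime), |Y ⟨k, hk⟩ ω / k| ≤ 1 / 2 := by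
    intro k hk
    have hk2 : (2:ℝ) ≤ (k:ℝ) := by exact_mod_cast hk.two_le
    have habs : |Y ⟨k, hk⟩ ω| = 1 := by
      rcases hpmω ⟨k, hk⟩ with h | h <;> simp [h]
    rw [abs_div, habs, abs_of_nonneg (by positivity : (0:ℝ) ≤ (k:ℝ))]
    rw [div_le_div_iff₀ (by linarith) (by norm_num)]
    linarith
  have hgabs : ∀ k, |g k| ≤ 2 * (1 / (k:ℝ) ^ 2) := by
    intro k
    by_cases hk : k.Prime
    · have hk2 : (2:ℝ) ≤ (k:ℝ) := by exact_mod_cast hk.two_le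
      set x := Y ⟨k, hk⟩ ω / k with hxdef
      have hx2 : |x| ≤ 1 / 2 := hx k hk
      have hx1 : |x| < 1 := lt_of_le_of_lt hx2 (by norm_num)
      have hlog := Real.abs_log_sub_add_sum_range_le hx1 1
      simp only [Finset.sum_range_one, pow_one, Nat.cast_zero, zero_add, div_one] at hlog
      have hg : g k = -(x + Real.log (1 - x)) := by
        rw [hgdef]
        simp only [dif_pos hk]
        rw [hZdef]
        simp only [dif_pos hk]
        ring
      rw [hg, abs_neg]
      have habsx : |x| = 1 / (k:ℝ) := by
        have habs : |Y ⟨k, hk⟩ ω| = 1 := by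
          rcases hpmω ⟨k, hk⟩ with h | h <;> simp [h]
        rw [hxdef, abs_div, habs, abs_of_nonneg (by positivity : (0:ℝ) ≤ (k:ℝ))]
      calc |x + Real.log (1 - x)| ≤ |x| ^ 2 / (1 - |x|) := hlog
        _ ≤ |x| ^ 2 / (1 / 2) := by
            apply div_le_div_of_nonneg_left (by positivity) (by norm_num)
            linarith
        _ = 2 * |x| ^ 2 := by ring
        _ = 2 * (1 / (k:ℝ) ^ 2) := by rw [habsx]; ring
    · rw [hgdef]
      simp only [dif_neg hk, abs_zero]
      positivity
  have hgsummable : Summable g := by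
    refine Summable.of_abs (Summable.of_nonneg_of_le (fun k => abs_nonneg _) hgabs ?_)
    exact (Real.summable_one_div_nat_pow.2 one_lt_two).mul_left 2
  have hgten : Tendsto (fun n => ∑ k ∈ Finset.range n, g k) atTop (nhds (∑' k, g k)) :=
    hgsummable.hasSum.tendsto_sum_nat
  have hLten : Tendsto (fun n => S n ω + ∑ k ∈ Finset.range n, g k) atTop
      (nhds (c + ∑' k, g k)) := hc.add hgten
  refine ⟨Real.exp (c + ∑' k, g k), (Real.exp_pos _).ne', ?_⟩
  have hprod : ∀ n, (∏ p ∈ Finset.range n,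
      if hp : p.Prime then (1 - Y ⟨p, hp⟩ ω / p)⁻¹ else 1)
      = Real.exp (S n ω + ∑ k ∈ Finset.range n, g k) := by
    intro n
    have hSnω : S n ω = ∑ k ∈ Finset.range n, Z k ω := by rw [hSdef]
    rw [hSnω, ← Finset.sum_add_distrib, Real.exp_sum]
    refine Finset.prod_congr rfl fun k _ => ?_
    by_cases hk : k.Prime
    · rw [dif_pos hk]
      have hk2 : (2:ℝ) ≤ (k:ℝ) := by exact_mod_cast hk.two_le
      have hpos : 0 < 1 - Y ⟨k, hk⟩ ω / k := by
        have := hx k hk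
        have := abs_le.1 this
        linarith [this.2]
      have hZg : Z k ω + g k = -Real.log (1 - Y ⟨k, hk⟩ ω / k) := by
        rw [hgdef]
        simp only [dif_pos hk]
        ring
      rw [hZg, Real.exp_neg, Real.exp_log hpos]
    · rw [dif_neg hk]
      have hZ0 : Z k ω = 0 := by rw [hZdef]; simp [hk]
      have hg0 : g k = 0 := by rw [hgdef]; simp [hk]
      rw [hZ0, hg0, add_zero, Real.exp_zero]
  rw [show (fun n : ℕ => ∏ p ∈ Finset.range n,
      if hp : p.Prime then (1 - Y ⟨p, hp⟩ ω / p)⁻¹ else 1)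
      = fun n => Real.exp (S n ω + ∑ k ∈ Finset.range n, g k) from funext hprod]
  exact (Real.continuous_exp.tendsto _).comp hLten
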